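/- Let n be a non-negative integer and let s, s' > max{3n + 3/2, 5/2}. Then the free propagator admits the asymptotic expansion e^{-itH₀} = π^{-1} Σ_{j=0}^{n} (−1)^{j−1} Γ(j+1/2) (it)^{−j−1/2} G_{2j} + o(t^{−n−1/2}) as t → +∞ in the operator norm from L^{2,s}(ℝ) to L^{2,−s'}(ℝ); precisely: for every ε > 0 there exists T > 0 such that for all t > T and every ψ ∈ L^{2,s}(ℝ), ‖e^{-itH₀}ψ − π^{-1} Σ_{j=0}^{n} (−1)^{j−1} Γ(j+1/2) (it)^{−j−1/2} G_{2j}ψ‖_{−s'} ≤ ε · t^{−n−1/2} · ‖ψ‖_s, where (it)^{−j−1/2} is the principal complex power and Γ is the Gamma function. -/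

import Mathlib

open MeasureTheory Filter

/-- The weighted norm `‖ψ‖_s = (∫ (1+x²)^s |ψ(x)|² dx)^{1/2}`. -/
noncomputable def wnorm (s : ℝ) (ψ : ℝ → ℂ) : ℝ :=
  (∫ x : ℝ, (1 + x ^ 2) ^ s * ‖ψ x‖ ^ 2) ^ ((1 : ℝ) / 2)

/-- Membership in the weighted space `L^{2,s}(ℝ)`. -/
def MemL2s (s : ℝ) (ψ : ℝ → ℂ) : Prop :=
  Measurable ψ ∧ Integrable (fun x : ℝ => (1 + x ^ 2) ^ s * ‖ψ x‖ ^ 2)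

/-- The integral operator `(G_j ψ)(x) = -(1/(2·j!)) ∫ |x-y|^j ψ(y) dy`. -/
noncomputable def Gop (j : ℕ) (ψ : ℝ → ℂ) (x : ℝ) : ℂ :=
  -(1 / (2 * (Nat.factorial j : ℂ))) * ∫ y : ℝ, ((|x - y| : ℝ) : ℂ) ^ j * ψ y

/-- The free propagator at time `t > 0`:
`(e^{-itH₀}ψ)(x) = (4πit)^{-1/2} ∫ exp(i(x-y)²/(4t)) ψ(y) dy`
(principal complex power). -/
noncomputable def freeProp (t : ℝ) (ψ : ℝ → ℂ) (x : ℝ) : ℂ :=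
  (4 * (Real.pi : ℂ) * Complex.I * (t : ℂ)) ^ (-(1 / 2) : ℂ) *
    ∫ y : ℝ, Complex.exp (Complex.I * ((x : ℂ) - (y : ℂ)) ^ 2 / (4 * (t : ℂ))) * ψ y


section FPaux
open Complex Finset

private lemma FP_hasDerivAt (N : ℕ) (v : ℝ) :
    HasDerivAt (fun w : ℝ => Complex.exp (Complex.I * w) -
        ∑ k ∈ range (N + 1), (Complex.I * w) ^ k / (Nat.factorial k))
      (Complex.I * (Complex.exp (Complex.I * v) -
        ∑ k ∈ range N, (Complex.I * v) ^ k / (Nat.factorial k))) v := by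
  have hexp : ∀ z : ℂ, HasDerivAt (fun z : ℂ => Complex.exp (Complex.I * z))
      (Complex.I * Complex.exp (Complex.I * z)) z := by
    intro z
    have h := (Complex.hasDerivAt_exp (Complex.I * z)).comp z
      ((hasDerivAt_id z).const_mul Complex.I)
    have h2 : HasDerivAt (fun z : ℂ => Complex.exp (Complex.I * z))
        (Complex.exp (Complex.I * z) * (Complex.I * 1)) z := h
    convert h2 using 1
    ring
  have hsum : ∀ z : ℂ, HasDerivAt (fun z : ℂ => ∑ k ∈ range (N + 1), (Complex.I * z) ^ k / (Nat.factorial k))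
      (Complex.I * ∑ k ∈ range N, (Complex.I * z) ^ k / (Nat.factorial k)) z := by
    intro z
    have h1 : HasDerivAt (fun z : ℂ => ∑ k ∈ range (N + 1), (Complex.I * z) ^ k / (Nat.factorial k))
        (∑ k ∈ range (N + 1), ((k : ℂ) * (Complex.I * z) ^ (k - 1) * Complex.I) / (Nat.factorial k)) z := by
      apply HasDerivAt.fun_sum
      intro k _
      have := ((hasDerivAt_pow k (Complex.I * z)).comp z
        ((hasDerivAt_id z).const_mul Complex.I)).div_const ((Nat.factorial k : ℂ))
      simpa [Function.comp, mul_comm, mul_assoc, mul_left_comm] using this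
    convert h1 using 1
    rw [Finset.sum_range_succ' (fun k => ((k : ℂ) * (Complex.I * z) ^ (k - 1) * Complex.I) / (Nat.factorial k))]
    simp only [Nat.cast_zero, zero_mul, Nat.factorial_zero, Nat.cast_one, zero_div, add_zero]
    rw [Finset.mul_sum]
    apply Finset.sum_congr rfl
    intro k _
    have hfac : ((Nat.factorial (k+1) : ℂ)) = ((k : ℂ)+1) * Nat.factorial k := by
      push_cast [Nat.factorial_succ]; ring
    rw [hfac]
    have hk1 : ((k : ℂ) + 1) ≠ 0 := Nat.cast_add_one_ne_zero k
    have hkf : ((Nat.factorial k : ℂ)) ≠ 0 := by exact_mod_cast Nat.factorial_ne_zero k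
    push_cast
    field_simp
  have := ((hexp v).sub (hsum v)).comp_ofReal
  simpa [mul_sub] using this

private lemma FP_taylor (N : ℕ) : ∀ u : ℝ,
    ‖Complex.exp (Complex.I * u) -
      ∑ k ∈ range (N + 1), (Complex.I * u) ^ k / (Nat.factorial k)‖ ≤ |u| ^ (N + 1) := by
  induction N with
  | zero =>
    intro u
    have hFTC := intervalIntegral.integral_eq_sub_of_hasDerivAt (a := 0) (b := u)
      (fun v _ => FP_hasDerivAt 0 v) (by
        apply Continuous.intervalIntegrable
        simp only [Finset.range_zero, Finset.sum_empty, sub_zero]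
        fun_prop)
    have h0 : Complex.exp (Complex.I * (0:ℝ)) -
        ∑ k ∈ range 1, (Complex.I * (0:ℝ)) ^ k / (Nat.factorial k) = 0 := by
      simp
    rw [h0, sub_zero] at hFTC
    rw [← hFTC]
    have hb := intervalIntegral.norm_integral_le_of_norm_le_const (a := 0) (b := u) (C := 1)
      (f := fun v : ℝ => Complex.I * (Complex.exp (Complex.I * v) -
        ∑ k ∈ range 0, (Complex.I * v) ^ k / (Nat.factorial k))) (by
        intro v _
        simp only [Finset.range_zero, Finset.sum_empty, sub_zero, norm_mul, Complex.norm_I, one_mul]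
        rw [Complex.norm_exp]
        simp)
    simpa using hb
  | succ N ih =>
    intro u
    have hFTC := intervalIntegral.integral_eq_sub_of_hasDerivAt (a := 0) (b := u)
      (fun v _ => FP_hasDerivAt (N+1) v) (by
        apply Continuous.intervalIntegrable
        fun_prop)
    have h0 : Complex.exp (Complex.I * (0:ℝ)) -
        ∑ k ∈ range (N+2), (Complex.I * (0:ℝ)) ^ k / (Nat.factorial k) = 0 := by
      rw [Finset.sum_eq_single 0]
      · simp
      · intro k _ hk
        simp [zero_pow hk]
      · simp
    rw [h0, sub_zero] at hFTC
    rw [← hFTC]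
    have hb := intervalIntegral.norm_integral_le_of_norm_le_const (a := 0) (b := u)
      (C := |u| ^ (N+1))
      (f := fun v : ℝ => Complex.I * (Complex.exp (Complex.I * v) -
        ∑ k ∈ range (N+1), (Complex.I * v) ^ k / (Nat.factorial k))) (by
        intro v hv
        rw [norm_mul, Complex.norm_I, one_mul]
        refine (ih v).trans ?_
        have hvu : |v| ≤ |u| := by
          obtain ⟨ha, hb⟩ := hv
          have hmin : -|u| ≤ min 0 u := le_min (neg_nonpos.mpr (abs_nonneg u)) (neg_abs_le u)
          have hmax : max 0 u ≤ |u| := max_le (abs_nonneg u) (le_abs_self u)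
          exact abs_le.mpr ⟨by linarith, by linarith⟩
        exact pow_le_pow_left₀ (abs_nonneg v) hvu _)
    calc ‖_‖ ≤ |u|^(N+1) * |u - 0| := hb
      _ = |u| ^ (N+2) := by rw [sub_zero]; ring

private lemma FP_integrable_weight {a : ℝ} (ha : a < -(1/2)) :
    Integrable (fun y : ℝ => (1 + y ^ 2) ^ a) := by
  have h1 : (Module.finrank ℝ ℝ : ℝ) < -2 * a := by
    simp only [Module.finrank_self, Nat.cast_one]; linarith
  have h := integrable_rpow_neg_one_add_norm_sq (E := ℝ) (μ := volume) h1
  have : ∀ y : ℝ, ((1:ℝ) + ‖y‖ ^ 2) ^ (-(-2*a) / 2) = (1 + y ^ 2) ^ a := by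
    intro y
    rw [Real.norm_eq_abs, _root_.sq_abs]
    norm_num
  simpa [this] using h

/-- Cauchy–Schwarz for integrals of nonnegative functions. -/

private lemma FP_integrable_mul {f g : ℝ → ℝ} (hfm : Measurable f) (hgm : Measurable g)
    (hf0 : ∀ y, 0 ≤ f y) (hg0 : ∀ y, 0 ≤ g y)
    (hf2 : Integrable (fun y => f y ^ 2)) (hg2 : Integrable (fun y => g y ^ 2)) :
    Integrable (fun y => f y * g y) := by
  refine Integrable.mono' ((hf2.add hg2).div_const 2) ((hfm.mul hgm).aestronglyMeasurable) ?_
  filter_upwards with y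
  rw [Real.norm_eq_abs, _root_.abs_of_nonneg (mul_nonneg (hf0 y) (hg0 y))]
  simp only [Pi.add_apply]
  nlinarith [sq_nonneg (f y - g y)]

private lemma FP_cauchy_schwarz {f g : ℝ → ℝ} (hfm : Measurable f) (hgm : Measurable g)
    (hf0 : ∀ y, 0 ≤ f y) (hg0 : ∀ y, 0 ≤ g y)
    (hf2 : Integrable (fun y => f y ^ 2)) (hg2 : Integrable (fun y => g y ^ 2)) :
    (∫ y : ℝ, f y * g y) ^ 2 ≤ (∫ y : ℝ, f y ^ 2) * (∫ y : ℝ, g y ^ 2) := by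
  have hfg : Integrable (fun y => f y * g y) := by
    refine Integrable.mono' ((hf2.add hg2).div_const 2) ((hfm.mul hgm).aestronglyMeasurable) ?_
    filter_upwards with y
    rw [Real.norm_eq_abs, _root_.abs_of_nonneg (mul_nonneg (hf0 y) (hg0 y))]
    simp only [Pi.add_apply]
    nlinarith [sq_nonneg (f y - g y)]
  set A := ∫ y : ℝ, f y ^ 2 with hA
  set B := ∫ y : ℝ, g y ^ 2 with hB
  set C := ∫ y : ℝ, f y * g y with hC
  have hA0 : 0 ≤ A := integral_nonneg fun y => sq_nonneg _
  have hB0 : 0 ≤ B := integral_nonneg fun y => sq_nonneg _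
  have hC0 : 0 ≤ C := integral_nonneg fun y => mul_nonneg (hf0 y) (hg0 y)
  have key : ∀ l : ℝ, 0 ≤ l ^ 2 * A - 2 * l * C + B := by
    intro l
    have h1 : 0 ≤ ∫ y : ℝ, (l * f y - g y) ^ 2 :=
      integral_nonneg fun y => sq_nonneg _
    have h2 : (fun y : ℝ => (l * f y - g y) ^ 2) =
        fun y => l ^ 2 * f y ^ 2 - 2 * l * (f y * g y) + g y ^ 2 := by
      funext y; ring
    rw [h2] at h1
    have hI1 : Integrable (fun y : ℝ => l ^ 2 * f y ^ 2 - 2 * l * (f y * g y)) :=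
      (hf2.const_mul _).sub (hfg.const_mul _)
    rwa [integral_add hI1 hg2,
      integral_sub (hf2.const_mul _) (hfg.const_mul _),
      integral_const_mul, integral_const_mul, ← hA, ← hB, ← hC] at h1
  rcases eq_or_lt_of_le hA0 with hA' | hA'
  · -- A = 0 : then C = 0
    have hCz : C = 0 := by
      by_contra hne
      have hCpos : 0 < C := lt_of_le_of_ne hC0 (Ne.symm hne)
      have := key ((B + 1) / C)
      rw [← hA'] at this
      have hq : 2 * ((B+1)/C) * C = 2 * (B+1) := by field_simp
      nlinarith
    rw [hCz]
    simpa using mul_nonneg hA0 hB0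
  · have := key (C / A)
    have h3 : (C/A)^2 * A = C^2/A := by field_simp
    have h4 : 2 * (C/A) * C = 2 * C^2 / A := by field_simp
    rw [h3, h4] at this
    have h5 : 0 ≤ (A * B - C^2)/A := by
      have : C^2/A - 2*C^2/A + B = (A*B - C^2)/A := by field_simp; ring
      linarith [this ▸ ‹0 ≤ C^2/A - 2*C^2/A + B›]
    have := (div_nonneg_iff.mp h5)
    rcases this with ⟨h6, _⟩ | ⟨_, h7⟩
    · linarith
    · linarith
  
/-- `Γ(j + 1/2) = √π (2j)! / (4^j j!)`. -/

private lemma FP_Gamma_half (j : ℕ) :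
    Real.Gamma ((j : ℝ) + 1/2) =
      Real.sqrt Real.pi * (Nat.factorial (2*j)) / (4 ^ j * Nat.factorial j) := by
  induction j with
  | zero => norm_num [Real.Gamma_one_half_eq]
  | succ k ih =>
    have h := Real.Gamma_add_one (s := (k : ℝ) + 1/2) (by positivity)
    have hcast : ((k+1 : ℕ) : ℝ) + 1/2 = ((k : ℝ) + 1/2) + 1 := by push_cast; ring
    rw [hcast, h, ih]
    have h2 : Nat.factorial (2*(k+1)) = (2*k+2) * ((2*k+1) * Nat.factorial (2*k)) := by
      rw [show 2*(k+1) = (2*k+1)+1 by ring, Nat.factorial_succ, Nat.factorial_succ]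
    rw [h2, Nat.factorial_succ]
    have hk : (Nat.factorial k : ℝ) ≠ 0 := by exact_mod_cast Nat.factorial_ne_zero k
    have h4 : ((4:ℝ)) ^ k ≠ 0 := by positivity
    push_cast
    field_simp
    ring

/-- Splitting a complex power of a positive real multiple. -/

private lemma FP_cpow_ofReal_mul {r : ℝ} (hr : 0 < r) {z : ℂ} (hz : z ≠ 0) (w : ℂ) :
    ((r : ℂ) * z) ^ w = (r : ℂ) ^ w * z ^ w := by
  have hr0 : (r : ℂ) ≠ 0 := by exact_mod_cast hr.ne'
  rw [Complex.cpow_def_of_ne_zero (mul_ne_zero hr0 hz),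
    Complex.cpow_def_of_ne_zero hr0, Complex.cpow_def_of_ne_zero hz,
    Complex.log_ofReal_mul hr hz, add_mul, Complex.exp_add, Complex.ofReal_log hr.le]

private lemma FP_sqrt4pi : ((4 * Real.pi) ^ (-(1/2) : ℝ) : ℝ) = (2 * Real.sqrt Real.pi)⁻¹ := by
  rw [Real.rpow_neg (by positivity)]
  congr 1
  rw [show (4 * Real.pi) = (2 * Real.sqrt Real.pi)^2 by
    rw [mul_pow, Real.sq_sqrt Real.pi_pos.le]; norm_num]
  rw [← Real.rpow_natCast (2 * Real.sqrt Real.pi) 2, ← Real.rpow_mul (by positivity)]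
  norm_num

private lemma FP_coeff {t : ℝ} (ht : 0 < t) (j : ℕ) :
    (Real.pi : ℂ)⁻¹ * ((-1 : ℂ) ^ (j + 1) * ((Real.Gamma ((j : ℝ) + 1/2) : ℝ) : ℂ) *
        (Complex.I * (t : ℂ)) ^ (-(j : ℂ) - 1/2)) * (-(1 / (2 * (Nat.factorial (2*j) : ℂ)))) =
      (4 * (Real.pi : ℂ) * Complex.I * (t : ℂ)) ^ (-(1/2) : ℂ) *
        (Complex.I ^ j / ((4 * (t : ℂ)) ^ j * (Nat.factorial j : ℂ))) := by
  have htc : ((t : ℂ)) ≠ 0 := by exact_mod_cast ht.ne'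
  have hz : Complex.I * (t : ℂ) ≠ 0 := mul_ne_zero Complex.I_ne_zero htc
  rw [show (-(j : ℂ) - 1/2 : ℂ) = (-(j:ℂ)) + (-(1/2):ℂ) by ring,
    Complex.cpow_add _ _ hz, Complex.cpow_neg, Complex.cpow_natCast,
    show (4*(Real.pi:ℂ)*Complex.I*(t:ℂ)) = (((4*Real.pi : ℝ)):ℂ) * (Complex.I*(t:ℂ)) by
      push_cast; ring,
    FP_cpow_ofReal_mul (by positivity) hz,
    show ((-(1/2) : ℂ)) = ((-(1/2) : ℝ) : ℂ) by norm_num,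
    ← Complex.ofReal_cpow (by positivity), FP_sqrt4pi, FP_Gamma_half]
  have hq2 : ((Real.sqrt Real.pi : ℝ) : ℂ)^2 = ((Real.pi : ℝ) : ℂ) := by
    rw [← Complex.ofReal_pow, Real.sq_sqrt Real.pi_pos.le]
  have hq0 : ((Real.sqrt Real.pi : ℝ) : ℂ) ≠ 0 := by
    simpa using Real.sqrt_ne_zero'.mpr Real.pi_pos
  have hpi0 : ((Real.pi : ℝ) : ℂ) ≠ 0 := by simpa using Real.pi_ne_zero
  have hfj : ((Nat.factorial j : ℂ)) ≠ 0 := by exact_mod_cast Nat.factorial_ne_zero j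
  have hf2j : ((Nat.factorial (2*j) : ℂ)) ≠ 0 := by exact_mod_cast Nat.factorial_ne_zero (2*j)
  have hbb : (-1 : ℂ) ^ j * (-1 : ℂ) ^ j = 1 := by
    rw [← mul_pow]; norm_num
  have hinv : (Complex.I ^ j)⁻¹ = (-1 : ℂ) ^ j * Complex.I ^ j := by
    refine inv_eq_of_mul_eq_one_left ?_
    rw [mul_assoc, ← pow_add, show j + j = 2*j by ring, pow_mul, Complex.I_sq, ← mul_pow]
    norm_num
  rw [pow_succ, ← hq2]
  push_cast
  rw [show (Complex.I * (t:ℂ)) ^ j = Complex.I ^ j * (t:ℂ) ^ j from mul_pow _ _ _,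
    show ((4:ℂ) * (t:ℂ)) ^ j = (4:ℂ) ^ j * (t:ℂ) ^ j from mul_pow _ _ _]
  have hc0 : ((t:ℂ)) ^ j ≠ 0 := pow_ne_zero _ htc
  have hd0 : ((4:ℂ)) ^ j ≠ 0 := pow_ne_zero _ (by norm_num)
  have ha0 : Complex.I ^ j ≠ 0 := pow_ne_zero _ Complex.I_ne_zero
  generalize hA : Complex.I ^ j = a at *
  generalize hB : ((-1:ℂ)) ^ j = b at *
  generalize hC : ((t:ℂ)) ^ j = c at *
  generalize hD : ((4:ℂ)) ^ j = d at *
  rw [mul_inv, hinv]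
  field_simp
  linear_combination hbb

private lemma FP_sq_rpow (a : ℝ) (y : ℝ) : ((1 + y ^ 2) ^ a) ^ 2 = (1 + y ^ 2) ^ (2 * a) := by
  have h : (0:ℝ) < 1 + y ^ 2 := by positivity
  rw [← Real.rpow_natCast ((1 + y^2) ^ a) 2, ← Real.rpow_mul h.le]
  norm_num [mul_comm]

private lemma FP_meas_f (s : ℝ) (x : ℝ) (k : ℕ) :
    Measurable fun y : ℝ => |x - y| ^ k * (1 + y ^ 2) ^ (-s/2) :=
  (((measurable_const.sub measurable_id).abs.pow_const k)).mul
    (((continuous_const.add (continuous_pow 2)).rpow_const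
      (fun y => Or.inl (by simp only [Pi.add_apply]; positivity))).measurable)

private lemma FP_meas_g {ψ : ℝ → ℂ} (hmeas : Measurable ψ) (s : ℝ) :
    Measurable fun y : ℝ => (1 + y ^ 2) ^ (s/2) * ‖ψ y‖ :=
  (((continuous_const.add (continuous_pow 2)).rpow_const
    (fun y => Or.inl (by simp only [Pi.add_apply]; positivity))).measurable).mul hmeas.norm

private lemma FP_f_sq_le {s : ℝ} {m : ℕ} (x : ℝ) {k : ℕ} (hkm : k ≤ m) (y : ℝ) :
    (|x - y| ^ k * (1 + y ^ 2) ^ (-s/2)) ^ 2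
      ≤ (2 ^ m * (1 + x ^ 2) ^ m) * (1 + y ^ 2) ^ ((m : ℝ) - s) := by
  have hy : (0:ℝ) < 1 + y ^ 2 := by positivity
  have h1 : (|x - y| ^ k * (1 + y ^ 2) ^ (-s/2)) ^ 2
      = (|x - y| ^ 2) ^ k * (1 + y ^ 2) ^ (-s : ℝ) := by
    rw [mul_pow, pow_right_comm, FP_sq_rpow, show 2 * (-s/2) = -s by ring]
  rw [h1]
  have h2 : (|x - y| ^ 2 : ℝ) ≤ 2 * (1 + x ^ 2) * (1 + y ^ 2) := by
    rw [_root_.sq_abs]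
    nlinarith [sq_nonneg (x + y), sq_nonneg (x*y)]
  have h3 : ((|x - y| ^ 2) ^ k : ℝ) ≤ (2 * (1 + x ^ 2) * (1 + y ^ 2)) ^ m := by
    calc (|x - y| ^ 2) ^ k ≤ (2 * (1 + x ^ 2) * (1 + y ^ 2)) ^ k := by
          apply pow_le_pow_left₀ (by positivity) h2
      _ ≤ (2 * (1 + x ^ 2) * (1 + y ^ 2)) ^ m := by
          apply pow_le_pow_right₀ (by nlinarith [sq_nonneg x, sq_nonneg y]) hkm
  calc (|x - y| ^ 2) ^ k * (1 + y ^ 2) ^ (-s : ℝ)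
      ≤ (2 * (1 + x ^ 2) * (1 + y ^ 2)) ^ m * (1 + y ^ 2) ^ (-s : ℝ) := by
        apply mul_le_mul_of_nonneg_right h3 (Real.rpow_nonneg hy.le _)
    _ = (2 ^ m * (1 + x ^ 2) ^ m) * (1 + y ^ 2) ^ ((m : ℝ) - s) := by
        rw [mul_pow, mul_pow, ← Real.rpow_natCast (1 + y^2) m, mul_assoc,
          ← Real.rpow_add hy]
        ring_nf

private lemma FP_f_sq_integrable {s : ℝ} {m : ℕ} (hms : (m : ℝ) - s < -(1/2)) (x : ℝ)
    {k : ℕ} (hkm : k ≤ m) :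
    Integrable (fun y : ℝ => (|x - y| ^ k * (1 + y ^ 2) ^ (-s/2)) ^ 2) := by
  refine Integrable.mono' ((FP_integrable_weight hms).const_mul (2 ^ m * (1 + x ^ 2) ^ m))
    ((FP_meas_f s x k).pow_const 2).aestronglyMeasurable ?_
  filter_upwards with y
  rw [Real.norm_eq_abs, _root_.abs_of_nonneg (sq_nonneg _)]
  exact FP_f_sq_le x hkm y

private lemma FP_g_sq_integrable {s : ℝ} {ψ : ℝ → ℂ}
    (hint : Integrable (fun y : ℝ => (1 + y ^ 2) ^ s * ‖ψ y‖ ^ 2)) :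
    Integrable (fun y : ℝ => ((1 + y ^ 2) ^ (s/2) * ‖ψ y‖) ^ 2) := by
  refine (integrable_congr (Filter.Eventually.of_forall fun y => ?_)).mpr hint
  rw [mul_pow, FP_sq_rpow, show 2 * (s/2) = s by ring]

private lemma FP_kernel_integrable {s : ℝ} {ψ : ℝ → ℂ} (hmeas : Measurable ψ)
    (hint : Integrable (fun y : ℝ => (1 + y ^ 2) ^ s * ‖ψ y‖ ^ 2))
    {m : ℕ} (hms : (m : ℝ) - s < -(1/2)) (x : ℝ) {k : ℕ} (hkm : k ≤ m) :
    Integrable (fun y : ℝ => |x - y| ^ k * ‖ψ y‖) := by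
  have h := FP_integrable_mul (FP_meas_f s x k) (FP_meas_g hmeas s)
    (fun y => by positivity) (fun y => by positivity)
    (FP_f_sq_integrable hms x hkm) (FP_g_sq_integrable hint)
  refine (integrable_congr (Filter.Eventually.of_forall fun y => ?_)).mpr h
  have hy : (0:ℝ) < 1 + y ^ 2 := by positivity
  have h1 : (1 + y ^ 2) ^ (-s/2) * (1 + y ^ 2) ^ (s/2) = 1 := by
    rw [← Real.rpow_add hy, show -s/2 + s/2 = 0 by ring, Real.rpow_zero]
  calc |x - y| ^ k * ‖ψ y‖ = (|x - y| ^ k * ((1 + y ^ 2) ^ (-s/2) * (1 + y ^ 2) ^ (s/2))) * ‖ψ y‖ := by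
        rw [h1, mul_one]
    _ = |x - y| ^ k * (1 + y ^ 2) ^ (-s/2) * ((1 + y ^ 2) ^ (s/2) * ‖ψ y‖) := by ring

private lemma FP_phi_sq_le {s : ℝ} {ψ : ℝ → ℂ} (hmeas : Measurable ψ)
    (hint : Integrable (fun y : ℝ => (1 + y ^ 2) ^ s * ‖ψ y‖ ^ 2))
    {m : ℕ} (hms : (m : ℝ) - s < -(1/2)) (x : ℝ) :
    (∫ y : ℝ, |x - y| ^ m * ‖ψ y‖) ^ 2
      ≤ (2 ^ m * (1 + x ^ 2) ^ m * ∫ y : ℝ, (1 + y ^ 2) ^ ((m : ℝ) - s))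
          * ∫ y : ℝ, (1 + y ^ 2) ^ s * ‖ψ y‖ ^ 2 := by
  have hCS := FP_cauchy_schwarz (FP_meas_f s x m) (FP_meas_g hmeas s)
    (fun y => by positivity) (fun y => by positivity)
    (FP_f_sq_integrable hms x le_rfl) (FP_g_sq_integrable hint)
  have heq : (∫ y : ℝ, (fun y => |x - y| ^ m * (1 + y ^ 2) ^ (-s/2)) y *
      (fun y => (1 + y ^ 2) ^ (s/2) * ‖ψ y‖) y) = ∫ y : ℝ, |x - y| ^ m * ‖ψ y‖ := by
    apply integral_congr_ae
    filter_upwards with y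
    have hy : (0:ℝ) < 1 + y ^ 2 := by positivity
    have h1 : (1 + y ^ 2) ^ (-s/2) * (1 + y ^ 2) ^ (s/2) = 1 := by
      rw [← Real.rpow_add hy, show -s/2 + s/2 = 0 by ring, Real.rpow_zero]
    calc |x - y| ^ m * (1 + y ^ 2) ^ (-s/2) * ((1 + y ^ 2) ^ (s/2) * ‖ψ y‖)
        = (|x - y| ^ m * ‖ψ y‖) * ((1 + y ^ 2) ^ (-s/2) * (1 + y ^ 2) ^ (s/2)) := by ring
      _ = |x - y| ^ m * ‖ψ y‖ := by rw [h1, mul_one]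
  have hg : (∫ y : ℝ, ((fun y => (1 + y ^ 2) ^ (s/2) * ‖ψ y‖) y) ^ 2)
      = ∫ y : ℝ, (1 + y ^ 2) ^ s * ‖ψ y‖ ^ 2 := by
    apply integral_congr_ae
    filter_upwards with y
    rw [mul_pow, FP_sq_rpow, show 2 * (s/2) = s by ring]
  rw [heq, hg] at hCS
  refine hCS.trans ?_
  apply mul_le_mul_of_nonneg_right ?_ (integral_nonneg fun y => by positivity)
  have hmono : (∫ y : ℝ, (|x - y| ^ m * (1 + y ^ 2) ^ (-s/2)) ^ 2)
      ≤ ∫ y : ℝ, (2 ^ m * (1 + x ^ 2) ^ m) * (1 + y ^ 2) ^ ((m : ℝ) - s) :=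
    integral_mono_of_nonneg (Filter.Eventually.of_forall fun y => sq_nonneg _)
      ((FP_integrable_weight hms).const_mul _)
      (Filter.Eventually.of_forall fun y => FP_f_sq_le x le_rfl y)
  rw [integral_const_mul] at hmono
  exact hmono

private lemma FP_term {t : ℝ} (ht : 0 < t) (ψ : ℝ → ℂ) (x : ℝ) (j : ℕ) :
    (Real.pi : ℂ)⁻¹ * ((-1 : ℂ) ^ (j + 1) * ((Real.Gamma ((j : ℝ) + 1/2) : ℝ) : ℂ) *
        (Complex.I * (t : ℂ)) ^ (-(j : ℂ) - 1/2) * Gop (2*j) ψ x)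
      = (4 * (Real.pi : ℂ) * Complex.I * (t : ℂ)) ^ (-(1/2) : ℂ) *
        ∫ y : ℝ, (Complex.I * ((((x - y)^2/(4*t)) : ℝ) : ℂ)) ^ j / (Nat.factorial j : ℂ) * ψ y := by
  have hS1 : (∫ y : ℝ, ((|x - y| : ℝ) : ℂ) ^ (2*j) * ψ y)
      = ∫ y : ℝ, (((x - y : ℝ)) : ℂ) ^ (2*j) * ψ y := by
    apply integral_congr_ae
    filter_upwards with y
    congr 1
    rw [← Complex.ofReal_pow, ← Complex.ofReal_pow, Even.pow_abs (even_two_mul j)]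
  have hS2 : (∫ y : ℝ, (Complex.I * ((((x - y)^2/(4*t)) : ℝ) : ℂ)) ^ j / (Nat.factorial j : ℂ) * ψ y)
      = (Complex.I ^ j / ((4*(t:ℂ)) ^ j * (Nat.factorial j : ℂ))) *
          ∫ y : ℝ, (((x - y : ℝ)) : ℂ) ^ (2*j) * ψ y := by
    rw [← integral_const_mul]
    apply integral_congr_ae
    filter_upwards with y
    have h1 : ((((x - y)^2/(4*t)) : ℝ) : ℂ) = (((x - y : ℝ)) : ℂ)^2 / (4*(t:ℂ)) := by
      push_cast; ring
    rw [h1, mul_pow, div_pow, ← pow_mul]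
    have h2 : ((4:ℂ)*(t:ℂ))^j ≠ 0 := pow_ne_zero _ (by
      apply mul_ne_zero (by norm_num)
      exact_mod_cast ht.ne')
    have h3 : ((Nat.factorial j : ℂ)) ≠ 0 := by exact_mod_cast Nat.factorial_ne_zero j
    field_simp
  rw [Gop, hS1, hS2]
  linear_combination (∫ y : ℝ, (((x - y : ℝ)) : ℂ) ^ (2*j) * ψ y) * FP_coeff ht j

private lemma FP_norm_K {t : ℝ} (ht : 0 < t) :
    ‖(4 * (Real.pi : ℂ) * Complex.I * (t : ℂ)) ^ (-(1/2) : ℂ)‖ ≤ t ^ (-(1/2) : ℝ) := by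
  have hz : Complex.I * (t:ℂ) ≠ 0 := mul_ne_zero Complex.I_ne_zero (by exact_mod_cast ht.ne')
  rw [show (4*(Real.pi:ℂ)*Complex.I*(t:ℂ)) = (((4*Real.pi : ℝ)):ℂ) * (Complex.I*(t:ℂ)) by
      push_cast; ring,
    FP_cpow_ofReal_mul (by positivity) hz, norm_mul]
  have h1 : ‖(((4*Real.pi : ℝ)):ℂ) ^ (-(1/2) : ℂ)‖ ≤ 1 := by
    rw [show ((-(1/2):ℂ)) = ((-(1/2):ℝ):ℂ) by norm_num, ← Complex.ofReal_cpow (by positivity),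
      Complex.norm_real, Real.norm_eq_abs,
      _root_.abs_of_nonneg (Real.rpow_nonneg (by positivity) _)]
    apply Real.rpow_le_one_of_one_le_of_nonpos
    · nlinarith [Real.pi_gt_three]
    · norm_num
  have h2 : ‖(Complex.I*(t:ℂ)) ^ (-(1/2) : ℂ)‖ = t ^ (-(1/2) : ℝ) := by
    rw [show ((-(1/2):ℂ)) = ((-(1/2):ℝ):ℂ) by norm_num,
      Complex.norm_cpow_real]
    congr 1
    rw [norm_mul, Complex.norm_I, Complex.norm_real, one_mul, Real.norm_eq_abs, _root_.abs_of_pos ht]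
  calc ‖(((4*Real.pi : ℝ)):ℂ) ^ (-(1/2) : ℂ)‖ * ‖(Complex.I*(t:ℂ)) ^ (-(1/2) : ℂ)‖
      ≤ 1 * ‖(Complex.I*(t:ℂ)) ^ (-(1/2) : ℂ)‖ :=
        mul_le_mul_of_nonneg_right h1 (norm_nonneg _)
    _ = t ^ (-(1/2) : ℝ) := by rw [one_mul, h2]

section
variable {n : ℕ} {s t : ℝ} {ψ : ℝ → ℂ} (ht : 0 < t) (hmeas : Measurable ψ)
  (hint : Integrable (fun y : ℝ => (1 + y ^ 2) ^ s * ‖ψ y‖ ^ 2))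
  (hms : ((2*n+2 : ℕ) : ℝ) - s < -(1/2))
include ht hmeas hint hms

private lemma FP_exp_integrable (x : ℝ) :
    Integrable (fun y : ℝ => Complex.exp (Complex.I * ((((x - y)^2/(4*t)) : ℝ) : ℂ)) * ψ y) := by
  have h0 := FP_kernel_integrable hmeas hint hms x (k := 0) (Nat.zero_le _)
  refine Integrable.mono' h0 ?_ ?_
  · apply Measurable.aestronglyMeasurable
    refine (Complex.measurable_exp.comp ?_).mul hmeas
    exact (Complex.measurable_ofReal.comp (by fun_prop)).const_mul Complex.I
  · filter_upwards with y
    rw [norm_mul]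
    have h1 : ‖Complex.exp (Complex.I * ((((x - y)^2/(4*t)) : ℝ) : ℂ))‖ = 1 := by
      rw [mul_comm, Complex.norm_exp_ofReal_mul_I]
    rw [h1]
    simp

private lemma FP_pow_integrable (x : ℝ) {k : ℕ} (hk : k ≤ n) :
    Integrable (fun y : ℝ =>
      (Complex.I * ((((x - y)^2/(4*t)) : ℝ) : ℂ)) ^ k / (Nat.factorial k : ℂ) * ψ y) := by
  have h2k : 2*k ≤ 2*n+2 := by omega
  have h0 := (FP_kernel_integrable hmeas hint hms x (k := 2*k) h2k).const_mul
    (((4*t)⁻¹) ^ k / (Nat.factorial k : ℝ))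
  refine Integrable.mono' h0 ?_ ?_
  · apply Measurable.aestronglyMeasurable
    refine (((Complex.measurable_ofReal.comp (by fun_prop)).const_mul
      Complex.I).pow_const k).div_const _ |>.mul hmeas
  · filter_upwards with y
    rw [norm_mul, norm_div, norm_pow, norm_mul, Complex.norm_I, one_mul,
      Complex.norm_real, Complex.norm_natCast]
    have hu0 : (0:ℝ) ≤ (x - y)^2/(4*t) := by positivity
    rw [Real.norm_eq_abs, _root_.abs_of_nonneg hu0]
    have he : ((x - y)^2/(4*t)) ^ k = |x - y| ^ (2*k) * ((4*t)⁻¹) ^ k := by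
      rw [div_pow, ← pow_mul, ← Even.pow_abs (even_two_mul k), div_eq_mul_inv, inv_pow]
    rw [he]
    exact le_of_eq (by ring)

private lemma FP_kernel_identity (x : ℝ) :
    freeProp t ψ x -
      (Real.pi : ℂ)⁻¹ * ∑ j ∈ range (n + 1),
        (-1 : ℂ) ^ (j + 1) * ((Real.Gamma ((j : ℝ) + 1/2) : ℝ) : ℂ) *
          (Complex.I * (t : ℂ)) ^ (-(j : ℂ) - 1/2) * Gop (2*j) ψ x
    = (4 * (Real.pi : ℂ) * Complex.I * (t : ℂ)) ^ (-(1/2) : ℂ) *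
      ∫ y : ℝ, (Complex.exp (Complex.I * ((((x - y)^2/(4*t)) : ℝ) : ℂ)) -
        ∑ k ∈ range (n + 1), (Complex.I * ((((x - y)^2/(4*t)) : ℝ) : ℂ)) ^ k /
          (Nat.factorial k : ℂ)) * ψ y := by
  have htc : ((t:ℝ) : ℂ) ≠ 0 := by exact_mod_cast ht.ne'
  have hfp : freeProp t ψ x = (4 * (Real.pi : ℂ) * Complex.I * (t : ℂ)) ^ (-(1/2) : ℂ) *
      ∫ y : ℝ, Complex.exp (Complex.I * ((((x - y)^2/(4*t)) : ℝ) : ℂ)) * ψ y := by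
    rw [freeProp]
    congr 1
    apply integral_congr_ae
    filter_upwards with y
    congr 1
    have hd : (((x - y)^2/(4*t) : ℝ) : ℂ) = ((x:ℂ) - (y:ℂ))^2 / (4*(t:ℂ)) := by
      push_cast; ring
    rw [mul_div_assoc, hd]
  have hsum : (Real.pi : ℂ)⁻¹ * ∑ j ∈ range (n + 1),
      (-1 : ℂ) ^ (j + 1) * ((Real.Gamma ((j : ℝ) + 1/2) : ℝ) : ℂ) *
        (Complex.I * (t : ℂ)) ^ (-(j : ℂ) - 1/2) * Gop (2*j) ψ x
      = (4 * (Real.pi : ℂ) * Complex.I * (t : ℂ)) ^ (-(1/2) : ℂ) *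
        ∑ j ∈ range (n + 1), ∫ y : ℝ,
          (Complex.I * ((((x - y)^2/(4*t)) : ℝ) : ℂ)) ^ j / (Nat.factorial j : ℂ) * ψ y := by
    rw [Finset.mul_sum, Finset.mul_sum]
    exact Finset.sum_congr rfl fun j _ => FP_term ht ψ x j
  have hint_sum : ∀ j ∈ range (n+1), Integrable (fun y : ℝ =>
      (Complex.I * ((((x - y)^2/(4*t)) : ℝ) : ℂ)) ^ j / (Nat.factorial j : ℂ) * ψ y) :=
    fun j hj => FP_pow_integrable ht hmeas hint hms x (Nat.lt_succ_iff.mp (Finset.mem_range.mp hj))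
  have hR : (∫ y : ℝ, (Complex.exp (Complex.I * ((((x - y)^2/(4*t)) : ℝ) : ℂ)) -
        ∑ k ∈ range (n + 1), (Complex.I * ((((x - y)^2/(4*t)) : ℝ) : ℂ)) ^ k /
          (Nat.factorial k : ℂ)) * ψ y)
      = (∫ y : ℝ, Complex.exp (Complex.I * ((((x - y)^2/(4*t)) : ℝ) : ℂ)) * ψ y)
        - ∑ j ∈ range (n + 1), ∫ y : ℝ,
            (Complex.I * ((((x - y)^2/(4*t)) : ℝ) : ℂ)) ^ j / (Nat.factorial j : ℂ) * ψ y := by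
    have h1 : (fun y : ℝ => (Complex.exp (Complex.I * ((((x - y)^2/(4*t)) : ℝ) : ℂ)) -
        ∑ k ∈ range (n + 1), (Complex.I * ((((x - y)^2/(4*t)) : ℝ) : ℂ)) ^ k /
          (Nat.factorial k : ℂ)) * ψ y)
        = fun y : ℝ => Complex.exp (Complex.I * ((((x - y)^2/(4*t)) : ℝ) : ℂ)) * ψ y -
            ∑ k ∈ range (n + 1), (Complex.I * ((((x - y)^2/(4*t)) : ℝ) : ℂ)) ^ k /
              (Nat.factorial k : ℂ) * ψ y := by
      funext y
      rw [sub_mul, Finset.sum_mul]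
    rw [h1, integral_sub (FP_exp_integrable ht hmeas hint hms x)
      (integrable_finset_sum _ hint_sum), integral_finset_sum _ hint_sum]
  rw [hfp, hsum, hR]
  ring


private lemma FP_pointwise (x : ℝ) :
    ‖freeProp t ψ x -
      (Real.pi : ℂ)⁻¹ * ∑ j ∈ range (n + 1),
        (-1 : ℂ) ^ (j + 1) * ((Real.Gamma ((j : ℝ) + 1/2) : ℝ) : ℂ) *
          (Complex.I * (t : ℂ)) ^ (-(j : ℂ) - 1/2) * Gop (2*j) ψ x‖
    ≤ (t ^ (-(1/2) : ℝ) * ((4*t)⁻¹) ^ (n+1)) * ∫ y : ℝ, |x - y| ^ (2*n+2) * ‖ψ y‖ := by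
  rw [FP_kernel_identity ht hmeas hint hms x, norm_mul]
  have hΦ0 : (0:ℝ) ≤ ∫ y : ℝ, |x - y| ^ (2*n+2) * ‖ψ y‖ :=
    integral_nonneg fun y => by positivity
  have hrem : ‖∫ y : ℝ, (Complex.exp (Complex.I * ((((x - y)^2/(4*t)) : ℝ) : ℂ)) -
        ∑ k ∈ range (n + 1), (Complex.I * ((((x - y)^2/(4*t)) : ℝ) : ℂ)) ^ k /
          (Nat.factorial k : ℂ)) * ψ y‖
      ≤ ((4*t)⁻¹) ^ (n+1) * ∫ y : ℝ, |x - y| ^ (2*n+2) * ‖ψ y‖ := by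
    refine (norm_integral_le_integral_norm _).trans ?_
    have hmaj := (FP_kernel_integrable hmeas hint hms x (k := 2*n+2) le_rfl).const_mul
      (((4*t)⁻¹) ^ (n+1))
    refine (integral_mono_of_nonneg (Filter.Eventually.of_forall fun y => norm_nonneg _)
      hmaj (Filter.Eventually.of_forall fun y => ?_)).trans ?_
    · simp only []
      rw [norm_mul]
      have hu0 : (0:ℝ) ≤ (x - y)^2/(4*t) := by positivity
      have htay := FP_taylor n ((x - y)^2/(4*t))
      have he : |(x - y)^2/(4*t)| ^ (n+1) =
          ((4*t)⁻¹) ^ (n+1) * |x - y| ^ (2*n+2) := by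
        rw [_root_.abs_of_nonneg hu0, div_pow, ← pow_mul,
          ← Even.pow_abs (even_two_mul (n+1)), div_eq_mul_inv, inv_pow,
          show 2*(n+1) = 2*n+2 by ring]
        ring
      calc ‖Complex.exp (Complex.I * ((((x - y)^2/(4*t)) : ℝ) : ℂ)) -
            ∑ k ∈ range (n + 1), (Complex.I * ((((x - y)^2/(4*t)) : ℝ) : ℂ)) ^ k /
              (Nat.factorial k : ℂ)‖ * ‖ψ y‖
          ≤ |(x - y)^2/(4*t)| ^ (n+1) * ‖ψ y‖ :=
            mul_le_mul_of_nonneg_right htay (norm_nonneg _)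
        _ = ((4*t)⁻¹) ^ (n+1) * (|x - y| ^ (2*n+2) * ‖ψ y‖) := by rw [he]; ring
    · rw [integral_const_mul]
  calc ‖(4 * (Real.pi : ℂ) * Complex.I * (t : ℂ)) ^ (-(1/2) : ℂ)‖ * ‖_‖
      ≤ t ^ (-(1/2) : ℝ) * (((4*t)⁻¹) ^ (n+1) * ∫ y : ℝ, |x - y| ^ (2*n+2) * ‖ψ y‖) := by
        apply mul_le_mul (FP_norm_K ht) hrem (norm_nonneg _) (Real.rpow_nonneg ht.le _)
    _ = (t ^ (-(1/2) : ℝ) * ((4*t)⁻¹) ^ (n+1)) * ∫ y : ℝ, |x - y| ^ (2*n+2) * ‖ψ y‖ := by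
        ring

end

end FPaux

/-- Asymptotic expansion of the free propagator:
`e^{-itH₀} = π⁻¹ Σ_{j=0}^n (−1)^{j−1} Γ(j+1/2) (it)^{−j−1/2} G_{2j} + o(t^{−n−1/2})`
as `t → ∞`, in the operator norm from `L^{2,s}` to `L^{2,−s'}`,
for `s, s' > max{3n+3/2, 5/2}`.  (Note `(−1)^{j+1} = (−1)^{j−1}`.) -/
theorem stmt0 (n : ℕ) (s s' : ℝ)
    (hs : s > max (3 * (n : ℝ) + 3 / 2) (5 / 2))
    (hs' : s' > max (3 * (n : ℝ) + 3 / 2) (5 / 2)) :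
    ∀ ε > 0, ∃ T > 0, ∀ t : ℝ, t > T → ∀ ψ : ℝ → ℂ, MemL2s s ψ →
      wnorm (-s') (fun x : ℝ =>
          freeProp t ψ x -
            ((Real.pi : ℂ))⁻¹ * ∑ j ∈ Finset.range (n + 1),
              (-1 : ℂ) ^ (j + 1) * ((Real.Gamma ((j : ℝ) + 1 / 2) : ℝ) : ℂ) *
                (Complex.I * (t : ℂ)) ^ (-(j : ℂ) - 1 / 2) * Gop (2 * j) ψ x)
        ≤ ε * t ^ (-(n : ℝ) - 1 / 2) * wnorm s ψ := by
  obtain ⟨hs1, hs2⟩ := max_lt_iff.mp hs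
  obtain ⟨hs1', hs2'⟩ := max_lt_iff.mp hs'
  have hms : ((2*n+2 : ℕ) : ℝ) - s < -(1/2) := by
    rcases Nat.eq_zero_or_pos n with hn | hn
    · subst hn; push_cast; linarith
    · have h1 : (1:ℝ) ≤ (n:ℝ) := by exact_mod_cast hn
      push_cast; linarith
  have hms' : ((2*n+2 : ℕ) : ℝ) - s' < -(1/2) := by
    rcases Nat.eq_zero_or_pos n with hn | hn
    · subst hn; push_cast; linarith
    · have h1 : (1:ℝ) ≤ (n:ℝ) := by exact_mod_cast hn
      push_cast; linarith
  intro ε hε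
  have hD0 : 0 ≤ ∫ y : ℝ, (1+y^2) ^ (((2*n+2 : ℕ) : ℝ) - s) :=
    integral_nonneg fun y => Real.rpow_nonneg (by positivity) _
  have hE0 : 0 ≤ ∫ x : ℝ, (1+x^2) ^ (((2*n+2 : ℕ) : ℝ) - s') :=
    integral_nonneg fun y => Real.rpow_nonneg (by positivity) _
  set D := ∫ y : ℝ, (1+y^2) ^ (((2*n+2 : ℕ) : ℝ) - s) with hD
  set E := ∫ x : ℝ, (1+x^2) ^ (((2*n+2 : ℕ) : ℝ) - s') with hE
  have hCst0 : (0:ℝ) ≤ 2^(2*n+2) * D * E :=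
    mul_nonneg (mul_nonneg (by positivity) hD0) hE0
  refine ⟨max 1 ((2^(2*n+2) * D * E) ^ ((1:ℝ)/2) / ε), lt_of_lt_of_le one_pos (le_max_left _ _),
    ?_⟩
  intro t ht ψ hψ
  obtain ⟨hmeas, hint⟩ := hψ
  have ht1 : (1:ℝ) < t := lt_of_le_of_lt (le_max_left _ _) ht
  have ht0 : (0:ℝ) < t := lt_trans one_pos ht1
  have htε : (2^(2*n+2) * D * E) ^ ((1:ℝ)/2) < ε * t := by
    have h := lt_of_le_of_lt (le_max_right 1 _) ht
    rw [div_lt_iff₀ hε] at h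
    linarith
  have hN0 : 0 ≤ ∫ y : ℝ, (1+y^2) ^ s * ‖ψ y‖^2 :=
    integral_nonneg fun y => by positivity
  set N := ∫ y : ℝ, (1+y^2) ^ s * ‖ψ y‖^2 with hN
  -- pointwise bound on the weighted square
  have hpt : ∀ x : ℝ, (1+x^2) ^ (-s') * ‖freeProp t ψ x -
      (Real.pi : ℂ)⁻¹ * ∑ j ∈ Finset.range (n + 1),
        (-1 : ℂ) ^ (j + 1) * ((Real.Gamma ((j : ℝ) + 1 / 2) : ℝ) : ℂ) *
          (Complex.I * (t : ℂ)) ^ (-(j : ℂ) - 1 / 2) * Gop (2 * j) ψ x‖^2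
      ≤ (t⁻¹ * (t⁻¹)^(2*n+2) * (2^(2*n+2) * D * N)) * (1+x^2) ^ (((2*n+2 : ℕ) : ℝ) - s') := by
    intro x
    have hΦ0 : (0:ℝ) ≤ ∫ y : ℝ, |x - y| ^ (2*n+2) * ‖ψ y‖ :=
      integral_nonneg fun y => by positivity
    have h1 := FP_pointwise ht0 hmeas hint hms x
    have h2 : ‖freeProp t ψ x -
        (Real.pi : ℂ)⁻¹ * ∑ j ∈ Finset.range (n + 1),
          (-1 : ℂ) ^ (j + 1) * ((Real.Gamma ((j : ℝ) + 1 / 2) : ℝ) : ℂ) *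
            (Complex.I * (t : ℂ)) ^ (-(j : ℂ) - 1 / 2) * Gop (2 * j) ψ x‖^2
        ≤ (t ^ (-(1/2) : ℝ) * ((4*t)⁻¹) ^ (n+1))^2 *
            (∫ y : ℝ, |x - y| ^ (2*n+2) * ‖ψ y‖)^2 := by
      rw [← mul_pow]
      exact pow_le_pow_left₀ (norm_nonneg _) h1 2
    have h3 := FP_phi_sq_le hmeas hint hms x
    have hA2 : (t ^ (-(1/2) : ℝ) * ((4*t)⁻¹) ^ (n+1))^2 ≤ t⁻¹ * (t⁻¹)^(2*n+2) := by
      have e1 : (t ^ (-(1/2) : ℝ))^2 = t⁻¹ := by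
        rw [← Real.rpow_natCast (t ^ (-(1/2) : ℝ)) 2, ← Real.rpow_mul ht0.le]
        norm_num [Real.rpow_neg_one]
      have e2 : (((4*t)⁻¹) ^ (n+1))^2 = ((4*t)⁻¹)^(2*n+2) := by
        rw [← pow_mul]; congr 1; ring
      rw [mul_pow, e1, e2]
      apply mul_le_mul_of_nonneg_left ?_ (inv_nonneg.mpr ht0.le)
      exact pow_le_pow_left₀ (by positivity) (by
        apply inv_anti₀ ht0
        linarith) _
    have h4 : ‖freeProp t ψ x -
        (Real.pi : ℂ)⁻¹ * ∑ j ∈ Finset.range (n + 1),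
          (-1 : ℂ) ^ (j + 1) * ((Real.Gamma ((j : ℝ) + 1 / 2) : ℝ) : ℂ) *
            (Complex.I * (t : ℂ)) ^ (-(j : ℂ) - 1 / 2) * Gop (2 * j) ψ x‖^2
        ≤ (t⁻¹ * (t⁻¹)^(2*n+2)) * (2 ^ (2*n+2) * (1 + x ^ 2) ^ (2*n+2) * D * N) := by
      calc _ ≤ (t ^ (-(1/2) : ℝ) * ((4*t)⁻¹) ^ (n+1))^2 *
            (∫ y : ℝ, |x - y| ^ (2*n+2) * ‖ψ y‖)^2 := h2
        _ ≤ (t ^ (-(1/2) : ℝ) * ((4*t)⁻¹) ^ (n+1))^2 *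
            (2 ^ (2*n+2) * (1 + x ^ 2) ^ (2*n+2) * D * N) := by
            apply mul_le_mul_of_nonneg_left ?_ (sq_nonneg _)
            calc (∫ y : ℝ, |x - y| ^ (2*n+2) * ‖ψ y‖)^2
                ≤ (2 ^ (2*n+2) * (1 + x ^ 2) ^ (2*n+2) * D) * N := h3
              _ = 2 ^ (2*n+2) * (1 + x ^ 2) ^ (2*n+2) * D * N := by ring
        _ ≤ (t⁻¹ * (t⁻¹)^(2*n+2)) * (2 ^ (2*n+2) * (1 + x ^ 2) ^ (2*n+2) * D * N) := by
            apply mul_le_mul_of_nonneg_right hA2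
            exact mul_nonneg (mul_nonneg (by positivity) hD0) hN0
    have hw : (1+x^2) ^ (-s') * ((1 + x ^ 2) ^ (2*n+2) : ℝ)
        = (1+x^2) ^ (((2*n+2 : ℕ) : ℝ) - s') := by
      rw [← Real.rpow_natCast (1+x^2) (2*n+2), ← Real.rpow_add (by positivity)]
      congr 1
      push_cast; ring
    calc (1+x^2) ^ (-s') * ‖freeProp t ψ x -
        (Real.pi : ℂ)⁻¹ * ∑ j ∈ Finset.range (n + 1),
          (-1 : ℂ) ^ (j + 1) * ((Real.Gamma ((j : ℝ) + 1 / 2) : ℝ) : ℂ) *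
            (Complex.I * (t : ℂ)) ^ (-(j : ℂ) - 1 / 2) * Gop (2 * j) ψ x‖^2
        ≤ (1+x^2) ^ (-s') * ((t⁻¹ * (t⁻¹)^(2*n+2)) *
            (2 ^ (2*n+2) * (1 + x ^ 2) ^ (2*n+2) * D * N)) :=
          mul_le_mul_of_nonneg_left h4 (Real.rpow_nonneg (by positivity) _)
      _ = (t⁻¹ * (t⁻¹)^(2*n+2) * (2^(2*n+2) * D * N)) *
            ((1+x^2) ^ (-s') * ((1 + x ^ 2) ^ (2*n+2) : ℝ)) := by ring
      _ = (t⁻¹ * (t⁻¹)^(2*n+2) * (2^(2*n+2) * D * N)) *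
            (1+x^2) ^ (((2*n+2 : ℕ) : ℝ) - s') := by rw [hw]
  -- integrate
  have hIle : (∫ x : ℝ, (1+x^2) ^ (-s') * ‖freeProp t ψ x -
      (Real.pi : ℂ)⁻¹ * ∑ j ∈ Finset.range (n + 1),
        (-1 : ℂ) ^ (j + 1) * ((Real.Gamma ((j : ℝ) + 1 / 2) : ℝ) : ℂ) *
          (Complex.I * (t : ℂ)) ^ (-(j : ℂ) - 1 / 2) * Gop (2 * j) ψ x‖^2)
      ≤ (t⁻¹ * (t⁻¹)^(2*n+2) * (2^(2*n+2) * D * N)) * E := by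
    have hmono := integral_mono_of_nonneg
      (f := fun x : ℝ => (1+x^2) ^ (-s') * ‖freeProp t ψ x -
        (Real.pi : ℂ)⁻¹ * ∑ j ∈ Finset.range (n + 1),
          (-1 : ℂ) ^ (j + 1) * ((Real.Gamma ((j : ℝ) + 1 / 2) : ℝ) : ℂ) *
            (Complex.I * (t : ℂ)) ^ (-(j : ℂ) - 1 / 2) * Gop (2 * j) ψ x‖^2)
      (g := fun x : ℝ => (t⁻¹ * (t⁻¹)^(2*n+2) * (2^(2*n+2) * D * N)) *
        (1+x^2) ^ (((2*n+2 : ℕ) : ℝ) - s'))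
      (Filter.Eventually.of_forall fun x => by positivity)
      ((FP_integrable_weight hms').const_mul _)
      (Filter.Eventually.of_forall hpt)
    rw [integral_const_mul] at hmono
    exact hmono
  -- conclude
  rw [wnorm, wnorm]
  have hbase0 : 0 ≤ ∫ x : ℝ, (1+x^2) ^ (-s') * ‖freeProp t ψ x -
      (Real.pi : ℂ)⁻¹ * ∑ j ∈ Finset.range (n + 1),
        (-1 : ℂ) ^ (j + 1) * ((Real.Gamma ((j : ℝ) + 1 / 2) : ℝ) : ℂ) *
          (Complex.I * (t : ℂ)) ^ (-(j : ℂ) - 1 / 2) * Gop (2 * j) ψ x‖^2 :=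
    integral_nonneg fun x => by positivity
  have hstep := Real.rpow_le_rpow hbase0 hIle (by norm_num : (0:ℝ) ≤ (1:ℝ)/2)
  refine le_trans hstep ?_
  have htp0 : (0:ℝ) ≤ t⁻¹ * (t⁻¹)^(2*n+2) := by positivity
  have hrw : (t⁻¹ * (t⁻¹)^(2*n+2) * (2^(2*n+2) * D * N)) * E
      = (t⁻¹ * (t⁻¹)^(2*n+2)) * ((2^(2*n+2) * D * E) * N) := by ring
  rw [hrw, Real.mul_rpow htp0 (mul_nonneg hCst0 hN0), Real.mul_rpow hCst0 hN0]
  have htp : (t⁻¹ * (t⁻¹)^(2*n+2)) ^ ((1:ℝ)/2) = t⁻¹ * t ^ (-(n:ℝ) - 1/2) := by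
    have h1 : t⁻¹ * (t⁻¹)^(2*n+2) = t ^ (-(2*(n:ℝ)+3)) := by
      rw [← Real.rpow_neg_one t, ← Real.rpow_natCast (t ^ (-1:ℝ)) (2*n+2),
        ← Real.rpow_mul ht0.le, ← Real.rpow_add ht0]
      congr 1
      push_cast; ring
    rw [h1, ← Real.rpow_mul ht0.le, ← Real.rpow_neg_one t, ← Real.rpow_add ht0]
    congr 1
    ring
  rw [htp]
  have hC2 : t⁻¹ * ((2^(2*n+2) * D * E) ^ ((1:ℝ)/2)) ≤ ε := by
    have h1 : t⁻¹ * ((2^(2*n+2) * D * E) ^ ((1:ℝ)/2)) ≤ t⁻¹ * (ε * t) :=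
      mul_le_mul_of_nonneg_left (le_of_lt htε) (inv_nonneg.mpr ht0.le)
    have h2 : t⁻¹ * (ε * t) = ε := by field_simp
    linarith
  calc t⁻¹ * t ^ (-(n:ℝ) - 1/2) * ((2^(2*n+2) * D * E) ^ ((1:ℝ)/2) * N ^ ((1:ℝ)/2))
      = (t⁻¹ * ((2^(2*n+2) * D * E) ^ ((1:ℝ)/2))) * (t ^ (-(n:ℝ) - 1/2) * N ^ ((1:ℝ)/2)) := by
        ring
    _ ≤ ε * (t ^ (-(n:ℝ) - 1/2) * N ^ ((1:ℝ)/2)) :=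
        mul_le_mul_of_nonneg_right hC2
          (mul_nonneg (Real.rpow_nonneg ht0.le _) (Real.rpow_nonneg hN0 _))
    _ = ε * t ^ (-(n:ℝ) - 1/2) * N ^ ((1:ℝ)/2) := by ring
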